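/- The principal level 2 congruence subgroup Γ_n[2] of GL(n,ℤ) is generated by the matrices S_ij (1 ≤ i ≠ j ≤ n) and O_i (1 ≤ i ≤ n). -/

import Mathlib

/-- The principal level 2 congruence subgroup of `GL(n, ℤ)`: the kernel of
reduction of matrix entries mod 2. -/
def congruence2 (n : ℕ) : Subgroup (GL (Fin n) ℤ) :=
  (Matrix.GeneralLinearGroup.map (Int.castRingHom (ZMod 2))).ker

/-- `S i j`: 1s on the diagonal, 2 in position `(i,j)`, 0s elsewhere. -/
def Smat {n : ℕ} (i j : Fin n) : Matrix (Fin n) (Fin n) ℤ :=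
  1 + 2 • Matrix.single i j 1

/-- `O i`: identity except for `-1` in position `(i,i)`. -/
def Omat {n : ℕ} (i : Fin n) : Matrix (Fin n) (Fin n) ℤ :=
  1 - 2 • Matrix.single i i 1

namespace Cong2

open Matrix Subgroup

variable {n : ℕ}

/-- generating set -/
def gens (n : ℕ) : Set (GL (Fin n) ℤ) :=
  {g : GL (Fin n) ℤ |
    (∃ i j : Fin n, i ≠ j ∧ (g : Matrix (Fin n) (Fin n) ℤ) = Smat i j) ∨
    (∃ i : Fin n, (g : Matrix (Fin n) (Fin n) ℤ) = Omat i)}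

def addE (i j : Fin n) (a : ℤ) : Matrix (Fin n) (Fin n) ℤ :=
  1 + a • Matrix.single i j 1

lemma addE_mul {i j : Fin n} (h : i ≠ j) (a b : ℤ) :
    addE i j a * addE i j b = addE i j (a + b) := by
  have h0 : (single i j (1:ℤ)) * single i j 1 = 0 :=
    Matrix.single_mul_single_of_ne _ _ _ _ (Ne.symm h) _
  unfold addE
  simp only [add_mul, mul_add, one_mul, mul_one, smul_mul_assoc, mul_smul_comm, smul_add, h0,
    smul_zero, add_zero, add_smul]
  abel

lemma addE_mul_diag (i : Fin n) (a b : ℤ) :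
    addE i i a * addE i i b = addE i i (a + b + a * b) := by
  have h0 : (single i i (1:ℤ)) * single i i 1 = single i i 1 := by
    simpa using Matrix.single_mul_single_same (1:ℤ) i i i 1
  unfold addE
  simp only [add_mul, mul_add, one_mul, mul_one, smul_mul_assoc, mul_smul_comm, smul_add, h0,
    smul_smul, add_smul]
  rw [mul_comm b a]
  abel

lemma addE_zero (i j : Fin n) : addE i j 0 = 1 := by simp [addE]

lemma Smat_eq (i j : Fin n) : Smat i j = addE i j 2 := rfl

lemma Omat_eq (i : Fin n) : Omat i = addE i i (-2) := by
  unfold Omat addE; ext r c; simp [Matrix.single]; ring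

/-- the S-generator as a unit, with exponent. -/
def sUnit (i j : Fin n) (h : i ≠ j) (t : ℤ) : GL (Fin n) ℤ where
  val := addE i j (2 * t)
  inv := addE i j (-(2 * t))
  val_inv := by rw [addE_mul h, add_neg_cancel, addE_zero]
  inv_val := by rw [addE_mul h, neg_add_cancel, addE_zero]

def oUnit (i : Fin n) : GL (Fin n) ℤ where
  val := Omat i
  inv := Omat i
  val_inv := by rw [Omat_eq, addE_mul_diag]; norm_num [addE_zero]
  inv_val := by rw [Omat_eq, addE_mul_diag]; norm_num [addE_zero]


lemma addE_left_apply (i j : Fin n) (a : ℤ) (M : Matrix (Fin n) (Fin n) ℤ) (r c : Fin n) :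
    (addE i j a * M) r c = M r c + (if r = i then a * M j c else 0) := by
  unfold addE
  rw [add_mul, one_mul, smul_mul_assoc, Matrix.add_apply, Matrix.smul_apply]
  by_cases h : r = i
  · subst h
    rw [Matrix.single_mul_apply_same, if_pos rfl, one_mul, smul_eq_mul]
  · rw [Matrix.single_mul_apply_of_ne _ _ _ _ _ h, if_neg h, smul_zero]

lemma addE_right_apply (i j : Fin n) (a : ℤ) (M : Matrix (Fin n) (Fin n) ℤ) (r c : Fin n) :
    (M * addE i j a) r c = M r c + (if c = j then a * M r i else 0) := by
  unfold addE
  rw [mul_add, mul_one, mul_smul_comm, Matrix.add_apply, Matrix.smul_apply]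
  by_cases h : c = j
  · subst h
    rw [Matrix.mul_single_apply_same, if_pos rfl, mul_one, smul_eq_mul, mul_comm]
  · rw [Matrix.mul_single_apply_of_ne _ _ _ _ _ h, if_neg h, smul_zero]

lemma mem_cong_iff (g : GL (Fin n) ℤ) :
    g ∈ congruence2 n ↔
      ∀ i j : Fin n, ((g : Matrix (Fin n) (Fin n) ℤ) i j : ZMod 2) = if i = j then 1 else 0 := by
  rw [congruence2, MonoidHom.mem_ker, Units.ext_iff]
  constructor
  · intro h i j
    have h2 : ((Matrix.GeneralLinearGroup.map (Int.castRingHom (ZMod 2)) g :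
        Matrix (Fin n) (Fin n) (ZMod 2))) i j = (1 : Matrix (Fin n) (Fin n) (ZMod 2)) i j := by
      rw [h]; rfl
    rw [Matrix.GeneralLinearGroup.map_apply, Matrix.one_apply] at h2
    simpa using h2
  · intro h
    show (Matrix.GeneralLinearGroup.map (Int.castRingHom (ZMod 2)) g :
        Matrix (Fin n) (Fin n) (ZMod 2)) = ((1 : GL (Fin n) (ZMod 2)) : Matrix (Fin n) (Fin n) (ZMod 2))
    ext i j
    rw [Matrix.GeneralLinearGroup.map_apply]
    have h1 : ((1 : GL (Fin n) (ZMod 2)) : Matrix (Fin n) (Fin n) (ZMod 2)) i j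
        = (1 : Matrix (Fin n) (Fin n) (ZMod 2)) i j := rfl
    rw [h1, Matrix.one_apply]
    simpa using h i j

lemma diag_odd {g : GL (Fin n) ℤ} (hg : g ∈ congruence2 n) (i : Fin n) :
    ¬ (2:ℤ) ∣ (g : Matrix (Fin n) (Fin n) ℤ) i i := by
  intro hdvd
  have h1 := (mem_cong_iff g).mp hg i i
  rw [if_pos rfl] at h1
  have h0 : (((g : Matrix (Fin n) (Fin n) ℤ) i i : ℤ) : ZMod 2) = 0 :=
    (ZMod.intCast_zmod_eq_zero_iff_dvd _ 2).mpr (by exact_mod_cast hdvd)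
  rw [h0] at h1
  exact absurd h1 (by decide)

lemma off_even {g : GL (Fin n) ℤ} (hg : g ∈ congruence2 n) {i j : Fin n} (h : i ≠ j) :
    (2:ℤ) ∣ (g : Matrix (Fin n) (Fin n) ℤ) i j := by
  have h1 := (mem_cong_iff g).mp hg i j
  rw [if_neg h] at h1
  exact_mod_cast (ZMod.intCast_zmod_eq_zero_iff_dvd _ 2).mp h1

/-- the key Euclidean reduction step -/
lemma exists_reduce (a x : ℤ) (ha : a ≠ 0) (hpar : ¬ (2 ∣ (x + a))) :
    ∃ t : ℤ, (x + 2 * a * t).natAbs < a.natAbs := by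
  suffices h : ∀ a : ℤ, 0 < a → ∀ x : ℤ, ¬ (2 ∣ (x + a)) → ∃ t : ℤ, (x + 2 * a * t).natAbs < a.natAbs by
    rcases ha.lt_or_gt with hlt | hlt
    · obtain ⟨t, ht⟩ := h (-a) (by omega) x (by omega)
      refine ⟨-t, ?_⟩
      have he : x + 2 * a * (-t) = x + 2 * (-a) * t := by ring
      rw [he]; omega
    · exact h a hlt x hpar
  intro a ha x hx
  have h2a : (0:ℤ) < 2 * a := by omega
  set q := x / (2 * a) with hq
  set r := x % (2 * a) with hr
  have hr0 : 0 ≤ r := Int.emod_nonneg x (by omega)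
  have hr1 : r < 2 * a := Int.emod_lt_of_pos x h2a
  have hxr : x = 2 * a * q + r := (Int.mul_ediv_add_emod x (2 * a)).symm
  have hp2 : (2:ℤ) ∣ 2 * a * q := ⟨a * q, by ring⟩
  have hra : r ≠ a := by
    intro hcontra
    exact hx (by omega)
  by_cases hcase : r < a
  · refine ⟨-q, ?_⟩
    have he : x + 2 * a * (-q) = r := by linear_combination hxr
    rw [he]; omega
  · refine ⟨-q - 1, ?_⟩
    have he : x + 2 * a * (-q - 1) = r - 2 * a := by linear_combination hxr
    rw [he]; omega


lemma addE_apply (i j : Fin n) (a : ℤ) (r c : Fin n) :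
    addE i j a r c = (if r = c then 1 else 0) + (if r = i ∧ c = j then a else 0) := by
  simp only [addE, Matrix.add_apply, Matrix.one_apply, Matrix.smul_apply,
    Matrix.single, Matrix.of_apply, smul_eq_mul]
  by_cases h : r = i ∧ c = j
  · obtain ⟨h1, h2⟩ := h
    subst h1; subst h2
    simp
  · have h' : ¬ (i = r ∧ j = c) := fun hh => h ⟨hh.1.symm, hh.2.symm⟩
    simp [h, h']

lemma sUnit_one_mem {i j : Fin n} (h : i ≠ j) : sUnit i j h 1 ∈ Subgroup.closure (gens n) :=
  Subgroup.subset_closure (Or.inl ⟨i, j, h, by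
    show addE i j (2 * 1) = Smat i j
    rw [Smat_eq]; norm_num⟩)

lemma sUnit_mul {i j : Fin n} (h : i ≠ j) (s t : ℤ) :
    sUnit i j h s * sUnit i j h t = sUnit i j h (s + t) := by
  apply Units.ext
  show addE i j (2 * s) * addE i j (2 * t) = addE i j (2 * (s + t))
  rw [addE_mul h]
  have harg : (2*s + 2*t : ℤ) = 2*(s+t) := by ring
  rw [harg]

lemma sUnit_mem {i j : Fin n} (h : i ≠ j) (t : ℤ) : sUnit i j h t ∈ Subgroup.closure (gens n) := by
  induction t using Int.induction_on with
  | zero =>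
    have h0 : sUnit i j h 0 = 1 := by
      apply Units.ext
      show addE i j (2 * 0) = 1
      norm_num [addE_zero]
    rw [h0]; exact one_mem _
  | succ k ih =>
    have hk : sUnit i j h ((k : ℤ) + 1) = sUnit i j h k * sUnit i j h 1 := by
      rw [sUnit_mul]
    rw [hk]; exact mul_mem ih (sUnit_one_mem h)
  | pred k ih =>
    have hinv : sUnit i j h (-1) = (sUnit i j h 1)⁻¹ := by
      have hone : sUnit i j h (-1) * sUnit i j h 1 = 1 := by
        rw [sUnit_mul]
        apply Units.ext
        show addE i j (2 * (-1 + 1)) = 1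
        norm_num [addE_zero]
      exact eq_inv_of_mul_eq_one_left hone
    have hk : sUnit i j h (-(k : ℤ) - 1) = sUnit i j h (-k) * sUnit i j h (-1) := by
      rw [sUnit_mul]
      have harg : (-(k:ℤ) - 1) = -(k:ℤ) + -1 := by ring
      rw [harg]
    rw [hk, hinv]
    exact mul_mem ih (inv_mem (sUnit_one_mem h))

lemma oUnit_mem (i : Fin n) : oUnit i ∈ Subgroup.closure (gens n) :=
  Subgroup.subset_closure (Or.inr ⟨i, rfl⟩)

lemma gens_subset : gens n ⊆ (congruence2 n : Set (GL (Fin n) ℤ)) := by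
  rintro g (⟨i, j, hij, hg⟩ | ⟨i, hg⟩) <;> rw [SetLike.mem_coe, mem_cong_iff] <;> intro r c
  · rw [hg, Smat_eq, addE_apply]
    push_cast
    split_ifs <;> decide
  · rw [hg, Omat_eq, addE_apply]
    push_cast
    split_ifs <;> decide

lemma closure_le_cong : Subgroup.closure (gens n) ≤ congruence2 n :=
  (Subgroup.closure_le _).mpr gens_subset


/-- `M` agrees with the identity on all rows and columns with index `< k`. -/
def Agree (k : ℕ) (M : Matrix (Fin n) (Fin n) ℤ) : Prop :=
  ∀ i j : Fin n, (i.val < k ∨ j.val < k) → M i j = if i = j then 1 else 0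

def colM (K : Fin n) (M : Matrix (Fin n) (Fin n) ℤ) : ℕ :=
  (M K K).natAbs + ∑ i ∈ Finset.univ.erase K, (M i K).natAbs

def rowM (K : Fin n) (M : Matrix (Fin n) (Fin n) ℤ) : ℕ :=
  ∑ j ∈ Finset.univ.erase K, (M K j).natAbs

lemma rowClear (K : Fin n)
    (cont : ∀ g : GL (Fin n) ℤ, g ∈ congruence2 n →
      Agree (K.val + 1) (g : Matrix (Fin n) (Fin n) ℤ) → g ∈ Subgroup.closure (gens n)) :
    ∀ N : ℕ, ∀ g : GL (Fin n) ℤ, g ∈ congruence2 n →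
      Agree K.val (g : Matrix (Fin n) (Fin n) ℤ) →
      (g : Matrix (Fin n) (Fin n) ℤ) K K = 1 →
      (∀ i, i ≠ K → (g : Matrix (Fin n) (Fin n) ℤ) i K = 0) →
      rowM K (g : Matrix (Fin n) (Fin n) ℤ) < N → g ∈ Subgroup.closure (gens n) := by
  intro N
  induction N with
  | zero => intro g _ _ _ _ h; omega
  | succ N ih =>
    intro g hg hag hKK hcol hlt
    by_cases hz : ∀ j, j ≠ K → (g : Matrix (Fin n) (Fin n) ℤ) K j = 0
    · refine cont g hg ?_
      intro i j hij
      by_cases hiK : i.val < K.val ∨ j.val < K.val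
      · exact hag i j hiK
      · push_neg at hiK
        obtain ⟨h1, h2⟩ := hiK
        have hcases : i = K ∨ j = K := by
          rcases hij with h | h
          · exact Or.inl (Fin.ext (by omega))
          · exact Or.inr (Fin.ext (by omega))
        rcases hcases with rfl | rfl
        · by_cases hj : j = i
          · subst hj; rw [if_pos rfl]; exact hKK
          · rw [if_neg (fun hh => hj hh.symm)]
            exact hz j hj
        · by_cases hi : i = j
          · subst hi; rw [if_pos rfl]; exact hKK
          · rw [if_neg hi]
            exact hcol i hi
    · push_neg at hz
      obtain ⟨j, hjK, hbne⟩ := hz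
      have hKj : K ≠ j := fun hh => hjK hh.symm
      obtain ⟨c, hc⟩ := off_even hg hKj
      set s := sUnit K j hKj (-c) with hs
      set g' := g * s with hgdef
      have hcoe : (g' : Matrix (Fin n) (Fin n) ℤ)
          = (g : Matrix (Fin n) (Fin n) ℤ) * addE K j (2 * (-c)) :=
        Matrix.GeneralLinearGroup.coe_mul g s
      have hent : ∀ r c', (g' : Matrix (Fin n) (Fin n) ℤ) r c'
          = (g : Matrix (Fin n) (Fin n) ℤ) r c'
            + (if c' = j then (2 * (-c)) * (g : Matrix (Fin n) (Fin n) ℤ) r K else 0) := by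
        intro r c'
        rw [hcoe, addE_right_apply]
      have hsmem : s ∈ Subgroup.closure (gens n) := sUnit_mem hKj (-c)
      have hg' : g' ∈ congruence2 n := mul_mem hg (closure_le_cong hsmem)
      have hgK' : ∀ r, (g' : Matrix (Fin n) (Fin n) ℤ) r K
          = (g : Matrix (Fin n) (Fin n) ℤ) r K := by
        intro r
        rw [hent, if_neg hKj, add_zero]
      have hKj' : (g' : Matrix (Fin n) (Fin n) ℤ) K j = 0 := by
        rw [hent, if_pos rfl, hKK, hc]; ring
      have hother : ∀ c', c' ≠ j → (g' : Matrix (Fin n) (Fin n) ℤ) K c'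
          = (g : Matrix (Fin n) (Fin n) ℤ) K c' := by
        intro c' hc'
        rw [hent, if_neg hc', add_zero]
      have hjge : ¬ j.val < K.val := by
        intro hcon
        exact hbne (by rw [hag K j (Or.inr hcon), if_neg hKj])
      have hag' : Agree K.val (g' : Matrix (Fin n) (Fin n) ℤ) := by
        intro i' j' hij'
        rw [hent]
        by_cases hj' : j' = j
        · subst hj'
          have hi' : i'.val < K.val := by tauto
          have hi'K : i' ≠ K := fun hh => by subst hh; omega
          rw [if_pos rfl, hcol i' hi'K, mul_zero, add_zero]
          exact hag i' _ (Or.inl hi')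
        · rw [if_neg hj', add_zero]
          exact hag i' j' hij'
      have hlt' : rowM K (g' : Matrix (Fin n) (Fin n) ℤ)
          < rowM K (g : Matrix (Fin n) (Fin n) ℤ) := by
        unfold rowM
        apply Finset.sum_lt_sum
        · intro c' hc'
          by_cases hcj : c' = j
          · subst hcj; rw [hKj']; simp
          · rw [hother c' hcj]
        · refine ⟨j, Finset.mem_erase.mpr ⟨hjK, Finset.mem_univ j⟩, ?_⟩
          rw [hKj']
          simpa using Int.natAbs_pos.mpr hbne
      have hmem' : g' ∈ Subgroup.closure (gens n) := by
        refine ih g' hg' hag' ?_ ?_ ?_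
        · rw [hgK' K]; exact hKK
        · intro i hi; rw [hgK' i]; exact hcol i hi
        · omega
      have hfin : g = g' * s⁻¹ := by
        rw [hgdef, mul_assoc, mul_inv_cancel, mul_one]
      rw [hfin]
      exact mul_mem hmem' (inv_mem hsmem)


lemma colClear (K : Fin n)
    (cont : ∀ g : GL (Fin n) ℤ, g ∈ congruence2 n →
      Agree (K.val + 1) (g : Matrix (Fin n) (Fin n) ℤ) → g ∈ Subgroup.closure (gens n)) :
    ∀ N : ℕ, ∀ g : GL (Fin n) ℤ, g ∈ congruence2 n →
      Agree K.val (g : Matrix (Fin n) (Fin n) ℤ) →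
      colM K (g : Matrix (Fin n) (Fin n) ℤ) < N → g ∈ Subgroup.closure (gens n) := by
  intro N
  induction N with
  | zero => intro g _ _ h; omega
  | succ N ih =>
    intro g hg hag hlt
    by_cases hz : ∀ i, i ≠ K → (g : Matrix (Fin n) (Fin n) ℤ) i K = 0
    · -- column K is clear. the diagonal entry is a unit.
      have h1 : ((g⁻¹ : GL (Fin n) ℤ) : Matrix (Fin n) (Fin n) ℤ)
          * (g : Matrix (Fin n) (Fin n) ℤ) = 1 := by
        rw [← Matrix.GeneralLinearGroup.coe_mul, inv_mul_cancel]
        rfl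
      have h2 : (((g⁻¹ : GL (Fin n) ℤ) : Matrix (Fin n) (Fin n) ℤ)
          * (g : Matrix (Fin n) (Fin n) ℤ)) K K = (1 : Matrix (Fin n) (Fin n) ℤ) K K := by
        rw [h1]
      rw [Matrix.mul_apply, Matrix.one_apply_eq] at h2
      have hsum : ∑ x, ((g⁻¹ : GL (Fin n) ℤ) : Matrix (Fin n) (Fin n) ℤ) K x
            * (g : Matrix (Fin n) (Fin n) ℤ) x K
          = ((g⁻¹ : GL (Fin n) ℤ) : Matrix (Fin n) (Fin n) ℤ) K K
            * (g : Matrix (Fin n) (Fin n) ℤ) K K := by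
        apply Finset.sum_eq_single
        · intro b _ hb
          rw [hz b hb, mul_zero]
        · intro hK
          exact absurd (Finset.mem_univ K) hK
      rw [hsum] at h2
      have hU : IsUnit ((g : Matrix (Fin n) (Fin n) ℤ) K K) :=
        IsUnit.of_mul_eq_one _ (by rw [mul_comm]; exact h2)
      rcases Int.isUnit_iff.mp hU with hone | hneg
      · exact rowClear K cont (rowM K (g : Matrix (Fin n) (Fin n) ℤ) + 1) g hg hag hone hz
          (Nat.lt_succ_self _)
      · set g' := oUnit K * g with hgdef
        have hcoe : (g' : Matrix (Fin n) (Fin n) ℤ)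
            = addE K K (-2) * (g : Matrix (Fin n) (Fin n) ℤ) := by
          rw [hgdef, Matrix.GeneralLinearGroup.coe_mul]
          congr 1
          exact Omat_eq K
        have hent : ∀ r c', (g' : Matrix (Fin n) (Fin n) ℤ) r c'
            = (g : Matrix (Fin n) (Fin n) ℤ) r c'
              + (if r = K then (-2) * (g : Matrix (Fin n) (Fin n) ℤ) K c' else 0) := by
          intro r c'
          rw [hcoe, addE_left_apply]
        have hg' : g' ∈ congruence2 n := mul_mem (closure_le_cong (oUnit_mem K)) hg
        have hag' : Agree K.val (g' : Matrix (Fin n) (Fin n) ℤ) := by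
          intro i' j' hij'
          rw [hent]
          by_cases hi' : i' = K
          · have hvv : i'.val = K.val := congrArg Fin.val hi'
            have hj' : j'.val < K.val := by
              rcases hij' with h | h
              · omega
              · exact h
            have hKj' : K ≠ j' := fun hh => by rw [hh] at hj'; omega
            have h0 : (g : Matrix (Fin n) (Fin n) ℤ) K j' = 0 := by
              rw [hag K j' (Or.inr hj'), if_neg hKj']
            rw [if_pos hi', hi', h0, mul_zero, add_zero, if_neg hKj']
          · rw [if_neg hi', add_zero]
            exact hag i' j' hij'
        have hKK' : (g' : Matrix (Fin n) (Fin n) ℤ) K K = 1 := by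
          rw [hent, if_pos rfl, hneg]; ring
        have hz' : ∀ i, i ≠ K → (g' : Matrix (Fin n) (Fin n) ℤ) i K = 0 := by
          intro i hi
          rw [hent, if_neg hi, add_zero]
          exact hz i hi
        have hmem' : g' ∈ Subgroup.closure (gens n) :=
          rowClear K cont (rowM K (g' : Matrix (Fin n) (Fin n) ℤ) + 1) g' hg' hag' hKK' hz'
            (Nat.lt_succ_self _)
        have hfin : g = (oUnit K)⁻¹ * g' := by
          rw [hgdef, ← mul_assoc, inv_mul_cancel, one_mul]
        rw [hfin]
        exact mul_mem (inv_mem (oUnit_mem K)) hmem'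
    · push_neg at hz
      obtain ⟨i, hiK, hbne⟩ := hz
      have hige : ¬ i.val < K.val := by
        intro hcon
        exact hbne (by rw [hag i K (Or.inl hcon), if_neg hiK])
      have haodd : ¬ (2:ℤ) ∣ (g : Matrix (Fin n) (Fin n) ℤ) K K := diag_odd hg K
      have hbeven : (2:ℤ) ∣ (g : Matrix (Fin n) (Fin n) ℤ) i K := off_even hg hiK
      have ha0 : (g : Matrix (Fin n) (Fin n) ℤ) K K ≠ 0 := fun hh => haodd (by rw [hh]; exact dvd_zero 2)
      have hne : ((g : Matrix (Fin n) (Fin n) ℤ) i K).natAbs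
          ≠ ((g : Matrix (Fin n) (Fin n) ℤ) K K).natAbs := by
        intro hco
        omega
      rcases lt_or_gt_of_ne hne with hltc | hgtc
      · -- |b| < |a| : reduce the diagonal entry a
        obtain ⟨t, ht⟩ := exists_reduce ((g : Matrix (Fin n) (Fin n) ℤ) i K)
          ((g : Matrix (Fin n) (Fin n) ℤ) K K) hbne (by omega)
        have hKi : K ≠ i := fun hh => hiK hh.symm
        set s := sUnit K i hKi t with hs
        set g' := s * g with hgdef
        have hcoe : (g' : Matrix (Fin n) (Fin n) ℤ)
            = addE K i (2 * t) * (g : Matrix (Fin n) (Fin n) ℤ) :=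
          Matrix.GeneralLinearGroup.coe_mul s g
        have hent : ∀ r c', (g' : Matrix (Fin n) (Fin n) ℤ) r c'
            = (g : Matrix (Fin n) (Fin n) ℤ) r c'
              + (if r = K then (2 * t) * (g : Matrix (Fin n) (Fin n) ℤ) i c' else 0) := by
          intro r c'
          rw [hcoe, addE_left_apply]
        have hg' : g' ∈ congruence2 n := mul_mem (closure_le_cong (sUnit_mem hKi t)) hg
        have hag' : Agree K.val (g' : Matrix (Fin n) (Fin n) ℤ) := by
          intro i' j' hij'
          rw [hent]
          by_cases hi' : i' = K
          · have hvv : i'.val = K.val := congrArg Fin.val hi'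
            have hj' : j'.val < K.val := by
              rcases hij' with h | h
              · omega
              · exact h
            have hKj' : K ≠ j' := fun hh => by rw [hh] at hj'; omega
            have hij2 : i ≠ j' := fun hh => by rw [hh] at hige; omega
            have h0 : (g : Matrix (Fin n) (Fin n) ℤ) K j' = 0 := by
              rw [hag K j' (Or.inr hj'), if_neg hKj']
            have h0' : (g : Matrix (Fin n) (Fin n) ℤ) i j' = 0 := by
              rw [hag i j' (Or.inr hj'), if_neg hij2]
            rw [if_pos hi', hi', h0, h0', mul_zero, add_zero, if_neg hKj']
          · rw [if_neg hi', add_zero]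
            exact hag i' j' hij'
        have hKK' : (g' : Matrix (Fin n) (Fin n) ℤ) K K
            = (g : Matrix (Fin n) (Fin n) ℤ) K K
              + 2 * (g : Matrix (Fin n) (Fin n) ℤ) i K * t := by
          rw [hent, if_pos rfl]; ring
        have hcolother : ∀ r, r ≠ K → (g' : Matrix (Fin n) (Fin n) ℤ) r K
            = (g : Matrix (Fin n) (Fin n) ℤ) r K := by
          intro r hr
          rw [hent, if_neg hr, add_zero]
        have hlt' : colM K (g' : Matrix (Fin n) (Fin n) ℤ)
            < colM K (g : Matrix (Fin n) (Fin n) ℤ) := by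
          unfold colM
          have hsame : ∑ r ∈ Finset.univ.erase K, ((g' : Matrix (Fin n) (Fin n) ℤ) r K).natAbs
              = ∑ r ∈ Finset.univ.erase K, ((g : Matrix (Fin n) (Fin n) ℤ) r K).natAbs := by
            apply Finset.sum_congr rfl
            intro r hr
            rw [hcolother r (Finset.mem_erase.mp hr).1]
          rw [hsame, hKK']
          omega
        have hmem' : g' ∈ Subgroup.closure (gens n) := ih g' hg' hag' (by omega)
        have hfin : g = s⁻¹ * g' := by
          rw [hgdef, ← mul_assoc, inv_mul_cancel, one_mul]
        rw [hfin]
        exact mul_mem (inv_mem (sUnit_mem hKi t)) hmem'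
      · -- |a| < |b| : reduce the off-diagonal entry b
        obtain ⟨t, ht⟩ := exists_reduce ((g : Matrix (Fin n) (Fin n) ℤ) K K)
          ((g : Matrix (Fin n) (Fin n) ℤ) i K) ha0 (by omega)
        set s := sUnit i K hiK t with hs
        set g' := s * g with hgdef
        have hcoe : (g' : Matrix (Fin n) (Fin n) ℤ)
            = addE i K (2 * t) * (g : Matrix (Fin n) (Fin n) ℤ) :=
          Matrix.GeneralLinearGroup.coe_mul s g
        have hent : ∀ r c', (g' : Matrix (Fin n) (Fin n) ℤ) r c'
            = (g : Matrix (Fin n) (Fin n) ℤ) r c'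
              + (if r = i then (2 * t) * (g : Matrix (Fin n) (Fin n) ℤ) K c' else 0) := by
          intro r c'
          rw [hcoe, addE_left_apply]
        have hg' : g' ∈ congruence2 n := mul_mem (closure_le_cong (sUnit_mem hiK t)) hg
        have hag' : Agree K.val (g' : Matrix (Fin n) (Fin n) ℤ) := by
          intro i' j' hij'
          rw [hent]
          by_cases hi' : i' = i
          · have hvv : i'.val = i.val := congrArg Fin.val hi'
            have hj' : j'.val < K.val := by
              rcases hij' with h | h
              · omega
              · exact h
            have hKj' : K ≠ j' := fun hh => by rw [hh] at hj'; omega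
            have hij2 : i ≠ j' := fun hh => by rw [hh] at hige; omega
            have h0 : (g : Matrix (Fin n) (Fin n) ℤ) K j' = 0 := by
              rw [hag K j' (Or.inr hj'), if_neg hKj']
            have h0' : (g : Matrix (Fin n) (Fin n) ℤ) i j' = 0 := by
              rw [hag i j' (Or.inr hj'), if_neg hij2]
            rw [if_pos hi', hi', h0, h0', mul_zero, add_zero, if_neg hij2]
          · rw [if_neg hi', add_zero]
            exact hag i' j' hij'
        have hiK' : (g' : Matrix (Fin n) (Fin n) ℤ) i K
            = (g : Matrix (Fin n) (Fin n) ℤ) i K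
              + 2 * (g : Matrix (Fin n) (Fin n) ℤ) K K * t := by
          rw [hent, if_pos rfl]; ring
        have hcolother : ∀ r, r ≠ i → (g' : Matrix (Fin n) (Fin n) ℤ) r K
            = (g : Matrix (Fin n) (Fin n) ℤ) r K := by
          intro r hr
          rw [hent, if_neg hr, add_zero]
        have hlt' : colM K (g' : Matrix (Fin n) (Fin n) ℤ)
            < colM K (g : Matrix (Fin n) (Fin n) ℤ) := by
          unfold colM
          have hKne : K ≠ i := fun hh => hiK hh.symm
          have hsum : ∑ r ∈ Finset.univ.erase K, ((g' : Matrix (Fin n) (Fin n) ℤ) r K).natAbs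
              < ∑ r ∈ Finset.univ.erase K, ((g : Matrix (Fin n) (Fin n) ℤ) r K).natAbs := by
            apply Finset.sum_lt_sum
            · intro r hr
              by_cases hri : r = i
              · subst hri
                rw [hiK']
                omega
              · rw [hcolother r hri]
            · refine ⟨i, Finset.mem_erase.mpr ⟨hiK, Finset.mem_univ i⟩, ?_⟩
              rw [hiK']
              omega
          rw [hcolother K hKne]
          omega
        have hmem' : g' ∈ Subgroup.closure (gens n) := ih g' hg' hag' (by omega)
        have hfin : g = s⁻¹ * g' := by
          rw [hgdef, ← mul_assoc, inv_mul_cancel, one_mul]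
        rw [hfin]
        exact mul_mem (inv_mem (sUnit_mem hiK t)) hmem'


lemma cong_le_closure : congruence2 n ≤ Subgroup.closure (gens n) := by
  suffices h : ∀ m : ℕ, ∀ g : GL (Fin n) ℤ, g ∈ congruence2 n →
      Agree (n - m) (g : Matrix (Fin n) (Fin n) ℤ) → g ∈ Subgroup.closure (gens n) by
    intro g hg
    exact h n g hg (fun i j hij => absurd hij (by omega))
  intro m
  induction m with
  | zero =>
    intro g hg hag
    have hone : g = 1 := by
      apply Units.ext
      show (g : Matrix (Fin n) (Fin n) ℤ) = 1
      ext i j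
      rw [hag i j (Or.inl (by simpa using i.isLt)), Matrix.one_apply]
    rw [hone]; exact one_mem _
  | succ m ih =>
    intro g hg hag
    by_cases hnm : n - (m+1) = n - m
    · exact ih g hg (by rw [hnm] at hag; exact hag)
    · have hKlt : n - (m+1) < n := by omega
      have hsucc : n - (m+1) + 1 = n - m := by omega
      refine colClear ⟨n - (m+1), hKlt⟩ ?_
        (colM ⟨n - (m+1), hKlt⟩ (g : Matrix (Fin n) (Fin n) ℤ) + 1) g hg hag (Nat.lt_succ_self _)
      intro g' hg' hag'
      apply ih g' hg'
      rw [← hsucc]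
      exact hag'

end Cong2

/-- The principal level 2 congruence subgroup `Γ_n[2]` is generated by the
matrices `S_ij` (`i ≠ j`) and `O_i`. -/
theorem congruence2_generated_by_S_O (n : ℕ) :
    Subgroup.closure
      {g : GL (Fin n) ℤ |
        (∃ i j : Fin n, i ≠ j ∧ (g : Matrix (Fin n) (Fin n) ℤ) = Smat i j) ∨
        (∃ i : Fin n, (g : Matrix (Fin n) (Fin n) ℤ) = Omat i)} =
      congruence2 n :=
  le_antisymm Cong2.closure_le_cong Cong2.cong_le_closure
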